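/- Fix β ∈ ℝ and d > 0. Suppose Γ₁ ∈ (0,∞) and Γ_d ∈ (0,∞) satisfy: for ν-almost every w, −t^{−1} ln sup_{x∈ℝ} μ^x{ f : βw(s) ≤ f(s) ≤ 1 + βw(s) for all s ∈ [0,t] } → Γ₁ and −t^{−1} ln sup_{x∈ℝ} μ^x{ f : βw(s) ≤ f(s) ≤ d + βw(s) for all s ∈ [0,t] } → Γ_d as t → ∞. Then Γ_d = Γ₁ / d². -/

import Mathlib

open MeasureTheory ProbabilityTheory Filter Set Topology
open scoped Uniformity
open scoped NNReal ENNReal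

noncomputable section

/-- The path space `C([0,∞), ℝ)`. -/
abbrev BMPath : Type := C(ℝ≥0, ℝ)

instance : MeasurableSpace BMPath := borel _
instance : BorelSpace BMPath := ⟨rfl⟩

/-- `μ` is the law of a standard one-dimensional Brownian motion started at `x`:
a probability measure on `C([0,∞),ℝ)` under which the path starts at `x`,
increments are centered Gaussian with variance equal to the time lapse,
and increments over disjoint time intervals are independent. -/
structure IsBMLaw (x : ℝ) (μ : Measure BMPath) : Prop where
  isProb : IsProbabilityMeasure μ
  start : μ {f : BMPath | f 0 = x} = 1
  incr_law : ∀ s t : ℝ≥0, s ≤ t →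
      μ.map (fun f : BMPath => f t - f s) = gaussianReal 0 (t - s)
  indep_incr : ∀ (n : ℕ) (ts : Fin (n + 1) → ℝ≥0), Monotone ts →
      iIndepFun
        (fun (i : Fin n) (f : BMPath) => f (ts i.succ) - f (ts i.castSucc)) μ

/-- Paths staying in the moving corridor `[l + β·w(s), u + β·w(s)]` for all `s ∈ [0,t]`. -/
def corridor (β l u : ℝ) (t : ℝ≥0) (w : BMPath) : Set BMPath :=
  {f : BMPath | ∀ s ≤ t, l + β * w s ≤ f s ∧ f s ≤ u + β * w s}

/-- The corridor event together with the terminal window `[l' + β·w(t), u' + β·w(t)]`. -/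
def corridorEnd (β l u l' u' : ℝ) (t : ℝ≥0) (w : BMPath) : Set BMPath :=
  {f : BMPath | (∀ s ≤ t, l + β * w s ≤ f s ∧ f s ≤ u + β * w s) ∧
    (l' + β * w t ≤ f t ∧ f t ≤ u' + β * w t)}

/-- `X̄_t(w) = −ln inf_{x∈[a₀,b₀]} μ^x(corridor [l,u] with terminal window [l',u'])`. -/
def Xbar (μ : ℝ → Measure BMPath) (β l u a₀ b₀ l' u' : ℝ) (t : ℝ≥0) (w : BMPath) : ℝ :=
  - Real.log (⨅ x : Icc a₀ b₀, ((μ x) (corridorEnd β l u l' u' t w)).toReal)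

/-- `X̲_t(w) = −ln sup_{x∈ℝ} μ^x(corridor [l,u])`. -/
def Xlow (μ : ℝ → Measure BMPath) (β l u : ℝ) (t : ℝ≥0) (w : BMPath) : ℝ :=
  - Real.log (⨆ x : ℝ, ((μ x) (corridor β l u t w)).toReal)

/-! ### Auxiliary material -/

namespace CorridorScalingAux

/-- The cylinder σ-algebra on path space: the pullback of the product σ-algebra
under the coercion to functions. -/
def cylSA : MeasurableSpace BMPath :=
  MeasurableSpace.pi.comap (fun f : BMPath => (f : ℝ≥0 → ℝ))

lemma cyl_le_borel : cylSA ≤ (inferInstance : MeasurableSpace BMPath) := by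
  refine measurable_iff_comap_le.mp ?_
  exact measurable_pi_lambda _ (fun t => (continuous_eval_const t).measurable)

lemma measurable_ev (t : ℝ≥0) : Measurable (fun f : BMPath => f t) :=
  (continuous_eval_const t).measurable

lemma cyl_measurable_ev (t : ℝ≥0) :
    @Measurable BMPath ℝ cylSA _ (fun f : BMPath => f t) := by
  have h : @Measurable BMPath (ℝ≥0 → ℝ) cylSA _ (fun f : BMPath => (f : ℝ≥0 → ℝ)) :=
    measurable_iff_comap_le.mpr le_rfl
  exact (measurable_pi_apply t).comp h

/-- A density argument: if a closed set of times contains all points of a dense set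
that are `≤ t`, together with `t` itself, then it contains all of `[0,t]`. -/
lemma mem_of_dense_le {T : Set ℝ≥0} (hT : Dense T) {t : ℝ≥0} {C : Set ℝ≥0}
    (hC : IsClosed C) (h1 : ∀ q ∈ T, q ≤ t → q ∈ C) (h2 : t ∈ C) :
    ∀ s ≤ t, s ∈ C := by
  intro s hs
  rcases eq_or_lt_of_le hs with rfl | hlt
  · exact h2
  have hsub : T ∩ Iio t ⊆ C := fun q hq => h1 q hq.1 (le_of_lt hq.2)
  have : s ∈ closure (T ∩ Iio t) := by
    rw [mem_closure_iff]
    intro U hU hsU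
    rcases hT.inter_open_nonempty (U ∩ Iio t) (hU.inter isOpen_Iio) ⟨s, hsU, hlt⟩ with
      ⟨q, ⟨hqU, hqlt⟩, hqT⟩
    exact ⟨q, hqU, hqT, hqlt⟩
  exact hC.closure_subset ((closure_mono hsub) this)

/-- Band sets (paths staying between two continuous functions up to time `t`) are
measurable for the cylinder σ-algebra. -/
lemma cyl_measurableSet_band (a b : ℝ≥0 → ℝ) (ha : Continuous a) (hb : Continuous b)
    (t : ℝ≥0) :
    MeasurableSet[cylSA] {f : BMPath | ∀ s ≤ t, a s ≤ f s ∧ f s ≤ b s} := by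
  obtain ⟨T, hTc, hTd⟩ := TopologicalSpace.exists_countable_dense ℝ≥0
  have hset : {f : BMPath | ∀ s ≤ t, a s ≤ f s ∧ f s ≤ b s}
      = (⋂ q ∈ T, {f : BMPath | q ≤ t → f q ∈ Icc (a q) (b q)})
        ∩ ((fun f : BMPath => f t) ⁻¹' Icc (a t) (b t)) := by
    ext f
    simp only [mem_setOf_eq, mem_inter_iff, mem_iInter, mem_preimage, mem_Icc]
    constructor
    · intro h
      exact ⟨fun q _ hq => h q hq, h t le_rfl⟩
    · rintro ⟨h1, h2⟩ s hs
      have hC : IsClosed {s : ℝ≥0 | a s ≤ f s ∧ f s ≤ b s} :=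
        (isClosed_le ha f.continuous).inter (isClosed_le f.continuous hb)
      exact mem_of_dense_le hTd hC (fun q hq hqt => h1 q hq hqt) h2 s hs
  rw [hset]
  refine MeasurableSet.inter ?_ ((cyl_measurable_ev t) measurableSet_Icc)
  refine MeasurableSet.biInter hTc (fun q _ => ?_)
  by_cases hq : q ≤ t
  · have : {f : BMPath | q ≤ t → f q ∈ Icc (a q) (b q)}
        = (fun f : BMPath => f q) ⁻¹' Icc (a q) (b q) := by
      ext f; simp [hq]
    rw [this]
    exact (cyl_measurable_ev q) measurableSet_Icc
  · have : {f : BMPath | q ≤ t → f q ∈ Icc (a q) (b q)} = univ := by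
      ext f; simp [hq]
    rw [this]; exact MeasurableSet.univ

/-- Every open set of path space is measurable for the cylinder σ-algebra. -/
lemma borel_le_cyl : (inferInstance : MeasurableSpace BMPath) ≤ cylSA := by
  have : (inferInstance : MeasurableSpace BMPath) = borel BMPath := rfl
  rw [this, borel]
  refine MeasurableSpace.generateFrom_le ?_
  intro U hU
  obtain ⟨D, hDc, hDd⟩ := TopologicalSpace.exists_countable_dense BMPath
  -- closed balls over `[0,n]` around `g`
  set B : BMPath → ℕ → ℚ → Set BMPath :=
    fun g n q => {h : BMPath | ∀ s ≤ (n : ℝ≥0), g s - (q : ℝ) ≤ h s ∧ h s ≤ g s + (q : ℝ)}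
    with hB
  have hBmeas : ∀ g n q, MeasurableSet[cylSA] (B g n q) := fun g n q =>
    cyl_measurableSet_band _ _ (g.continuous.sub continuous_const)
      (g.continuous.add continuous_const) _
  have hUeq : U = ⋃ g ∈ D, ⋃ n : ℕ, ⋃ q : ℚ, ⋃ (_ : B g n q ⊆ U), B g n q := by
    apply Subset.antisymm
    · intro f hf
      -- neighborhood basis of compact convergence
      have hbas : (𝓝 f).HasBasis (fun p : Set ℝ≥0 × Set (ℝ × ℝ) => IsCompact p.1 ∧ p.2 ∈ 𝓤 ℝ)
          (fun p => UniformSpace.ball f {fg : BMPath × BMPath | ∀ x ∈ p.1, (fg.1 x, fg.2 x) ∈ p.2}) :=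
        nhds_basis_uniformity'
          (ContinuousMap.hasBasis_compactConvergenceUniformity (α := ℝ≥0) (β := ℝ))
      have hUopen : IsOpen U := hU
      have hmem : U ∈ 𝓝 f := hUopen.mem_nhds hf
      rw [hbas.mem_iff] at hmem
      obtain ⟨⟨K, V⟩, ⟨hK, hV⟩, hsub⟩ := hmem
      obtain ⟨ε, hε, hεV⟩ := Metric.mem_uniformity_dist.mp hV
      -- bound the compact set by some `n`
      obtain ⟨c, hc⟩ := hK.bddAbove
      obtain ⟨n, hn⟩ := exists_nat_ge c
      have hKn : ∀ x ∈ K, x ≤ (n : ℝ≥0) := fun x hx => le_trans (hc hx) hn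
      -- rational radius
      obtain ⟨q, hq1, hq2⟩ := exists_rat_btwn (by linarith : ε / 3 < ε / 2)
      -- find a close element of the dense set
      have hNnhds : {h : BMPath | ∀ s ∈ Icc 0 (n : ℝ≥0), dist (f s) (h s) < ε / 3} ∈ 𝓝 f := by
        refine hbas.mem_of_mem (i := (Icc 0 (n : ℝ≥0), {p : ℝ × ℝ | dist p.1 p.2 < ε / 3}))
          ⟨isCompact_Icc, Metric.dist_mem_uniformity (by linarith)⟩
      obtain ⟨g, hgN, hgD⟩ := mem_closure_iff_nhds.mp (hDd f) _ hNnhds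
      have hgclose : ∀ s ≤ (n : ℝ≥0), dist (f s) (g s) < ε / 3 := by
        intro s hs; exact hgN s ⟨zero_le, hs⟩
      refine mem_iUnion₂.mpr ⟨g, hgD, mem_iUnion.mpr ⟨n, mem_iUnion.mpr ⟨q, ?_⟩⟩⟩
      have hqpos : (ε : ℝ) / 3 < (q : ℝ) := hq1
      have hBU : B g n q ⊆ U := by
        intro h hh
        apply hsub
        intro x hx
        apply hεV
        have hxn : x ≤ (n : ℝ≥0) := hKn x hx
        have h1 : dist (f x) (g x) < ε / 3 := hgclose x hxn
        have h2 : dist (g x) (h x) ≤ (q : ℝ) := by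
          rcases hh x hxn with ⟨hl, hr⟩
          rw [Real.dist_eq, abs_le]
          constructor <;> linarith
        calc dist (f x) (h x) ≤ dist (f x) (g x) + dist (g x) (h x) := dist_triangle _ _ _
          _ < ε / 3 + (q : ℝ) := by linarith
          _ < ε := by linarith
      refine mem_iUnion.mpr ⟨hBU, ?_⟩
      intro s hs
      have := hgclose s hs
      rw [Real.dist_eq] at this
      have habs : |f s - g s| < ε / 3 := this
      rw [abs_lt] at habs
      constructor <;> linarith [habs.1, habs.2]
    · refine iUnion₂_subset fun g _ => iUnion_subset fun n => iUnion_subset fun q =>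
        iUnion_subset fun hBU => hBU
  rw [hUeq]
  exact MeasurableSet.biUnion hDc fun g _ => MeasurableSet.iUnion fun n =>
    MeasurableSet.iUnion fun q => MeasurableSet.iUnion fun _ => hBmeas g n q

lemma borel_eq_cyl : (inferInstance : MeasurableSpace BMPath) = cylSA :=
  le_antisymm borel_le_cyl cyl_le_borel

lemma measurableSet_band (a b : ℝ≥0 → ℝ) (ha : Continuous a) (hb : Continuous b)
    (t : ℝ≥0) :
    MeasurableSet {f : BMPath | ∀ s ≤ t, a s ≤ f s ∧ f s ≤ b s} :=
  cyl_le_borel _ (cyl_measurableSet_band a b ha hb t)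

lemma measurableSet_corridor (β l u : ℝ) (t : ℝ≥0) (w : BMPath) :
    MeasurableSet (corridor β l u t w) :=
  measurableSet_band _ _ (continuous_const.add (continuous_const.mul w.continuous))
    (continuous_const.add (continuous_const.mul w.continuous)) t

end CorridorScalingAux


namespace CorridorScalingAux

variable {x : ℝ} {μ μ₁ μ₂ : Measure BMPath}

lemma start_ae (h : IsBMLaw x μ) : ∀ᵐ f ∂μ, f 0 = x := by
  haveI := h.isProb
  have hm : MeasurableSet {f : BMPath | f 0 = x} :=
    (measurable_ev 0) (measurableSet_singleton x)
  rw [ae_iff]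
  have : {f : BMPath | ¬ f 0 = x} = {f : BMPath | f 0 = x}ᶜ := rfl
  rw [this, measure_compl hm (measure_ne_top μ _), h.start, measure_univ, tsub_self]

/-- The increment map associated with a tuple of times. -/
def incMap {n : ℕ} (ts : Fin (n + 1) → ℝ≥0) : BMPath → (Fin n → ℝ) :=
  fun f i => f (ts i.succ) - f (ts i.castSucc)

lemma measurable_incMap {n : ℕ} (ts : Fin (n + 1) → ℝ≥0) : Measurable (incMap ts) :=
  measurable_pi_lambda _ fun i => (measurable_ev _).sub (measurable_ev _)

/-- The law of the increment vector is the product of Gaussians. -/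
lemma map_incMap (h : IsBMLaw x μ) {n : ℕ} (ts : Fin (n + 1) → ℝ≥0) (hts : Monotone ts) :
    μ.map (incMap ts) =
      Measure.pi (fun i : Fin n => gaussianReal 0 (ts i.succ - ts i.castSucc)) := by
  haveI := h.isProb
  symm
  refine Measure.pi_eq fun s hs => ?_
  rw [Measure.map_apply (measurable_incMap ts) (MeasurableSet.univ_pi hs)]
  have hpre : incMap ts ⁻¹' (univ.pi s)
      = ⋂ i ∈ (Finset.univ : Finset (Fin n)),
          (fun f : BMPath => f (ts i.succ) - f (ts i.castSucc)) ⁻¹' s i := by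
    ext f
    simp [incMap, Set.mem_pi]
  rw [hpre, (h.indep_incr n ts hts).measure_inter_preimage_eq_mul _ (fun i _ => hs i)]
  refine Finset.prod_congr rfl fun i _ => ?_
  rw [← h.incr_law (ts i.castSucc) (ts i.succ) (hts (Fin.castSucc_le_succ i)),
    Measure.map_apply (f := fun f : BMPath => f (ts i.succ) - f (ts i.castSucc))
      ((measurable_ev _).sub (measurable_ev _)) (hs i)]

/-- The evaluation map associated with a tuple of times. -/
def evMap {k : ℕ} (ts : Fin k → ℝ≥0) : BMPath → (Fin k → ℝ) :=
  fun f i => f (ts i)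

lemma measurable_evMap {k : ℕ} (ts : Fin k → ℝ≥0) : Measurable (evMap ts) :=
  measurable_pi_lambda _ fun i => measurable_ev _

/-- Reconstruction of evaluations from the starting point and the increments. -/
def recon (x : ℝ) {n : ℕ} : (Fin n → ℝ) → (Fin (n + 1) → ℝ) :=
  fun v i => x + ∑ j : Fin n, if (j : ℕ) < (i : ℕ) then v j else 0

lemma measurable_recon (x : ℝ) {n : ℕ} : Measurable (recon x (n := n)) := by
  refine measurable_pi_lambda _ fun i => ?_
  refine Measurable.add measurable_const ?_
  refine Finset.measurable_sum _ fun j _ => ?_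
  by_cases hj : (j : ℕ) < (i : ℕ) <;> simp [hj, measurable_pi_apply]

lemma recon_incMap {n : ℕ} (ts : Fin (n + 1) → ℝ≥0) (hts0 : ts 0 = 0)
    (f : BMPath) (hf : f 0 = x) :
    evMap ts f = recon x (incMap ts f) := by
  funext i
  induction i using Fin.induction with
  | zero =>
      have : ∀ j : Fin n, ¬ ((j : ℕ) < ((0 : Fin (n+1)) : ℕ)) := by simp
      simp [evMap, recon, this, hts0, hf]
  | succ i ih =>
      have hsum : (∑ j : Fin n, if (j : ℕ) < ((i.succ : Fin (n+1)) : ℕ)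
            then incMap ts f j else 0)
          = (∑ j : Fin n, if (j : ℕ) < ((i.castSucc : Fin (n+1)) : ℕ)
              then incMap ts f j else 0) + incMap ts f i := by
        have hsplit : ∀ j : Fin n,
            (if (j : ℕ) < ((i.succ : Fin (n+1)) : ℕ) then incMap ts f j else 0)
            = (if (j : ℕ) < ((i.castSucc : Fin (n+1)) : ℕ) then incMap ts f j else 0)
              + (if j = i then incMap ts f j else 0) := by
          intro j
          rcases lt_trichotomy (j : ℕ) (i : ℕ) with hj | hj | hj
          · have h1 : (j : ℕ) < ((i.succ : Fin (n+1)) : ℕ) := by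
              simp only [Fin.val_succ]; omega
            have h2 : (j : ℕ) < ((i.castSucc : Fin (n+1)) : ℕ) := by
              simp only [Fin.coe_castSucc]; omega
            have h3 : j ≠ i := by intro hji; subst hji; omega
            rw [if_pos h1, if_pos h2, if_neg h3, add_zero]
          · have hji : j = i := Fin.ext hj
            subst hji
            have h1 : (j : ℕ) < ((j.succ : Fin (n+1)) : ℕ) := by
              simp only [Fin.val_succ]; omega
            have h2 : ¬ ((j : ℕ) < ((j.castSucc : Fin (n+1)) : ℕ)) := by
              simp only [Fin.coe_castSucc]; omega
            rw [if_pos h1, if_neg h2, if_pos rfl, zero_add]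
          · have h1 : ¬ ((j : ℕ) < ((i.succ : Fin (n+1)) : ℕ)) := by
              simp only [Fin.val_succ]; omega
            have h2 : ¬ ((j : ℕ) < ((i.castSucc : Fin (n+1)) : ℕ)) := by
              simp only [Fin.coe_castSucc]; omega
            have h3 : j ≠ i := by intro hji; subst hji; omega
            rw [if_neg h1, if_neg h2, if_neg h3, add_zero]
        rw [Finset.sum_congr rfl (fun j _ => hsplit j), Finset.sum_add_distrib,
          Finset.sum_ite_eq' Finset.univ i]
        simp
      have hevi : evMap ts f i.castSucc = recon x (incMap ts f) i.castSucc := ih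
      simp only [evMap, recon] at hevi ⊢
      rw [hsum, ← add_assoc, ← hevi]
      simp [incMap]

/-- Finite-dimensional distributions along monotone time tuples starting at `0`
are uniquely determined. -/
lemma map_evMap_eq (h₁ : IsBMLaw x μ₁) (h₂ : IsBMLaw x μ₂) {n : ℕ}
    (ts : Fin (n + 1) → ℝ≥0) (hts : Monotone ts) (hts0 : ts 0 = 0) :
    μ₁.map (evMap ts) = μ₂.map (evMap ts) := by
  have key : ∀ μ : Measure BMPath, IsBMLaw x μ → μ.map (evMap ts)
      = (Measure.pi (fun i : Fin n => gaussianReal 0 (ts i.succ - ts i.castSucc))).map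
          (recon x) := by
    intro μ h
    have hae : evMap ts =ᵐ[μ] (recon x) ∘ (incMap ts) := by
      filter_upwards [start_ae h] with f hf
      exact recon_incMap ts hts0 f hf
    rw [Measure.map_congr hae,
      ← Measure.map_map (measurable_recon x) (measurable_incMap ts), map_incMap h ts hts]
  rw [key μ₁ h₁, key μ₂ h₂]

/-- Finite cylinder sets. -/
def cylSets : Set (Set BMPath) :=
  {A | ∃ (s : Finset ℝ≥0) (S : ℝ≥0 → Set ℝ), (∀ r, MeasurableSet (S r)) ∧
    A = {f : BMPath | ∀ r ∈ s, f r ∈ S r}}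

lemma isPiSystem_cylSets : IsPiSystem cylSets := by
  rintro A ⟨s, S, hS, rfl⟩ A' ⟨s', S', hS', rfl⟩ -
  refine ⟨s ∪ s', fun r => (if r ∈ s then S r else univ) ∩ (if r ∈ s' then S' r else univ),
    fun r => ?_, ?_⟩
  · refine MeasurableSet.inter ?_ ?_
    · by_cases h : r ∈ s <;> simp [h, hS r]
    · by_cases h : r ∈ s' <;> simp [h, hS' r]
  · ext f
    simp only [mem_inter_iff, mem_setOf_eq, Finset.mem_union, mem_ite_univ_right]
    constructor
    · rintro ⟨h1, h2⟩ r hr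
      exact ⟨fun hrs => h1 r hrs, fun hrs' => h2 r hrs'⟩
    · intro h
      exact ⟨fun r hr => (h r (Or.inl hr)).1 hr, fun r hr => (h r (Or.inr hr)).2 hr⟩

lemma generateFrom_cylSets :
    (inferInstance : MeasurableSpace BMPath) = MeasurableSpace.generateFrom cylSets := by
  refine le_antisymm ?_ ?_
  · calc (inferInstance : MeasurableSpace BMPath) ≤ cylSA := borel_le_cyl
    _ ≤ MeasurableSpace.generateFrom cylSets := by
        rw [cylSA, MeasurableSpace.pi_eq_generateFrom_projections,
          MeasurableSpace.comap_generateFrom]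
        refine MeasurableSpace.generateFrom_le ?_
        rintro A ⟨B, ⟨r, A', hA', rfl⟩, rfl⟩
        refine MeasurableSpace.measurableSet_generateFrom ?_
        refine ⟨{r}, fun _ => A', fun _ => hA', ?_⟩
        ext f; simp [Function.eval]
  · refine MeasurableSpace.generateFrom_le ?_
    rintro A ⟨s, S, hS, rfl⟩
    have : {f : BMPath | ∀ r ∈ s, f r ∈ S r} = ⋂ r ∈ s, (fun f : BMPath => f r) ⁻¹' S r := by
      ext f; simp
    rw [this]
    exact MeasurableSet.biInter s.countable_toSet fun r _ => (measurable_ev r) (hS r)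

/-- Uniqueness of the Brownian-motion law. -/
theorem bm_unique (h₁ : IsBMLaw x μ₁) (h₂ : IsBMLaw x μ₂) : μ₁ = μ₂ := by
  haveI := h₁.isProb
  haveI := h₂.isProb
  refine ext_of_generate_finite cylSets generateFrom_cylSets isPiSystem_cylSets ?_
    (by simp)
  rintro A ⟨s, S, hS, rfl⟩
  classical
  set s' : Finset ℝ≥0 := insert 0 s with hs'
  have hcardpos : 0 < s'.card := Finset.card_pos.mpr ⟨0, Finset.mem_insert_self 0 s⟩
  set n : ℕ := s'.card - 1 with hn
  have hcard : s'.card = n + 1 := (Nat.succ_pred_eq_of_pos hcardpos).symm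
  set e : Fin (n + 1) ≃o {r // r ∈ s'} := s'.orderIsoOfFin hcard with he
  set ts : Fin (n + 1) → ℝ≥0 := fun i => (e i : ℝ≥0) with hts
  have htsmono : Monotone ts := fun i j hij => by
    exact Subtype.coe_le_coe.mpr (e.monotone hij)
  have hts0 : ts 0 = 0 := by
    obtain ⟨i, hi⟩ := e.surjective ⟨0, Finset.mem_insert_self 0 s⟩
    have h1 : ts i = 0 := by rw [hts]; simp [hi]
    have h2 : ts 0 ≤ ts i := htsmono (Fin.zero_le i)
    exact le_antisymm (h1 ▸ h2) zero_le
  have hsurj : ∀ r ∈ s, ∃ i : Fin (n + 1), ts i = r := by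
    intro r hr
    obtain ⟨i, hi⟩ := e.surjective ⟨r, Finset.mem_insert_of_mem hr⟩
    exact ⟨i, by rw [hts]; simp [hi]⟩
  set T : Set (Fin (n + 1) → ℝ) := {v | ∀ i, ts i ∈ s → v i ∈ S (ts i)} with hT
  have hTmeas : MeasurableSet T := by
    have : T = ⋂ i, {v : Fin (n + 1) → ℝ | ts i ∈ s → v i ∈ S (ts i)} := by
      ext v; simp [hT]
    rw [this]
    refine MeasurableSet.iInter fun i => ?_
    by_cases hi : ts i ∈ s
    · have : {v : Fin (n + 1) → ℝ | ts i ∈ s → v i ∈ S (ts i)}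
          = (fun v : Fin (n + 1) → ℝ => v i) ⁻¹' S (ts i) := by ext v; simp [hi]
      rw [this]; exact (measurable_pi_apply i) (hS _)
    · have : {v : Fin (n + 1) → ℝ | ts i ∈ s → v i ∈ S (ts i)} = univ := by
        ext v; simp [hi]
      rw [this]; exact MeasurableSet.univ
  have hAeq : {f : BMPath | ∀ r ∈ s, f r ∈ S r} = evMap ts ⁻¹' T := by
    ext f
    simp only [mem_setOf_eq, mem_preimage, hT, evMap]
    constructor
    · intro h i hi; exact h (ts i) hi
    · intro h r hr
      obtain ⟨i, hi⟩ := hsurj r hr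
      have := h i (hi ▸ hr)
      rwa [hi] at this
  rw [hAeq, ← Measure.map_apply (measurable_evMap ts) hTmeas,
    ← Measure.map_apply (measurable_evMap ts) hTmeas,
    map_evMap_eq h₁ h₂ ts htsmono hts0]

end CorridorScalingAux

namespace CorridorScalingAux

/-- The Brownian scaling map `f ↦ (s ↦ f(d² s) / d)`. -/
def scaleMap (d : ℝ) : BMPath → BMPath := fun f =>
  ⟨fun s => f (d.toNNReal ^ 2 * s) / d,
    (f.continuous.comp (continuous_const.mul continuous_id)).div_const d⟩

lemma measurable_scaleMap (d : ℝ) : Measurable (scaleMap d) := by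
  have hco : Measurable (fun f : BMPath => fun s : ℝ≥0 => f (d.toNNReal ^ 2 * s) / d) :=
    measurable_pi_lambda _ fun s => (measurable_ev _).div_const d
  have h1 : @Measurable BMPath BMPath _ cylSA (scaleMap d) := by
    refine measurable_iff_comap_le.mpr ?_
    rw [cylSA, MeasurableSpace.comap_comp]
    exact measurable_iff_comap_le.mp hco
  exact h1.mono le_rfl borel_le_cyl

lemma isBMLaw_scaleMap {d x : ℝ} (hd : 0 < d) {μ : Measure BMPath} (h : IsBMLaw x μ) :
    IsBMLaw (x / d) (μ.map (scaleMap d)) := by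
  haveI := h.isProb
  set D : ℝ≥0 := d.toNNReal ^ 2 with hD
  have hDcoe : (D : ℝ) = d ^ 2 := by
    rw [hD]; push_cast [Real.coe_toNNReal d hd.le]; ring
  constructor
  · exact Measure.isProbabilityMeasure_map (measurable_scaleMap d).aemeasurable
  · show (μ.map (scaleMap d)) ((fun f : BMPath => f 0) ⁻¹' {x / d}) = 1
    rw [Measure.map_apply (measurable_scaleMap d)
      ((measurable_ev 0) (measurableSet_singleton (x / d)))]
    have hset : scaleMap d ⁻¹' ((fun f : BMPath => f 0) ⁻¹' {x / d}) = {f : BMPath | f 0 = x} := by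
      ext f
      show f (D * 0) / d = x / d ↔ f 0 = x
      rw [mul_zero]
      constructor
      · intro hh
        calc f 0 = f 0 / d * d := (div_mul_cancel₀ _ hd.ne').symm
          _ = x / d * d := by rw [hh]
          _ = x := div_mul_cancel₀ _ hd.ne'
      · intro hh; rw [hh]
    rw [hset, h.start]
  · intro s t hst
    rw [Measure.map_map (g := fun f : BMPath => f t - f s) ((measurable_ev t).sub (measurable_ev s)) (measurable_scaleMap d)]
    have hcomp : (fun f : BMPath => f t - f s) ∘ scaleMap d
        = (fun y : ℝ => d⁻¹ * y) ∘ (fun f : BMPath => f (D * t) - f (D * s)) := by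
      funext f
      show f (D * t) / d - f (D * s) / d = d⁻¹ * (f (D * t) - f (D * s))
      ring
    rw [hcomp, ← Measure.map_map (measurable_const_mul d⁻¹) (f := fun f : BMPath => f (D * t) - f (D * s))
      ((measurable_ev _).sub (measurable_ev _)),
      h.incr_law _ _ (mul_le_mul_right hst D)]
    have hmap := gaussianReal_map_const_mul (μ := 0) (v := D * t - D * s) d⁻¹
    have hfun : (fun y : ℝ => d⁻¹ * y) = (d⁻¹ * ·) := rfl
    rw [hfun, hmap, mul_zero]
    congr 1
    apply NNReal.coe_injective
    have h1 : D * s ≤ D * t := mul_le_mul_right hst D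
    push_cast [NNReal.coe_sub h1, NNReal.coe_sub hst, hDcoe]
    field_simp
  · intro n ts hts
    set ts' : Fin (n + 1) → ℝ≥0 := fun i => D * ts i with hts'
    have hts'mono : Monotone ts' := fun i j hij => mul_le_mul_right (hts hij) D
    have hbase := (h.indep_incr n ts' hts'mono).comp (fun _ => fun y : ℝ => d⁻¹ * y)
      (fun _ => measurable_const_mul d⁻¹)
    have hg : ∀ i : Fin n, Measurable (fun f : BMPath => f (ts i.succ) - f (ts i.castSucc)) :=
      fun i => (measurable_ev _).sub (measurable_ev _)
    have hcompi : ∀ i : Fin n,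
        (fun f : BMPath => f (ts i.succ) - f (ts i.castSucc)) ∘ scaleMap d
        = (fun y : ℝ => d⁻¹ * y) ∘ (fun f : BMPath => f (ts' i.succ) - f (ts' i.castSucc)) := by
      intro i
      funext f
      show f (D * ts i.succ) / d - f (D * ts i.castSucc) / d
        = d⁻¹ * (f (ts' i.succ) - f (ts' i.castSucc))
      rw [hts']
      ring
    rw [iIndepFun_iff_measure_inter_preimage_eq_mul]
    intro S sets hsets
    rw [Measure.map_apply (measurable_scaleMap d)
      (Finset.measurableSet_biInter S (fun i hi => hg i (hsets i hi)))]
    have hpre : scaleMap d ⁻¹'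
        (⋂ i ∈ S, (fun f : BMPath => f (ts i.succ) - f (ts i.castSucc)) ⁻¹' sets i)
        = ⋂ i ∈ S, ((fun y : ℝ => d⁻¹ * y)
            ∘ (fun f : BMPath => f (ts' i.succ) - f (ts' i.castSucc))) ⁻¹' sets i := by
      rw [preimage_iInter₂]
      refine iInter₂_congr fun i _ => ?_
      rw [← preimage_comp, hcompi i]
    rw [hpre, hbase.measure_inter_preimage_eq_mul _ hsets]
    refine Finset.prod_congr rfl fun i hi => ?_
    rw [Measure.map_apply (measurable_scaleMap d) (hg i (hsets i hi)), ← preimage_comp,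
      hcompi i]

lemma scaleMap_preimage_corridor {d : ℝ} (hd : 0 < d) (β : ℝ) (t : ℝ≥0) (w : BMPath) :
    scaleMap d ⁻¹' corridor β 0 1 (t / d.toNNReal ^ 2) (scaleMap d w)
      = corridor β 0 d t w := by
  set D : ℝ≥0 := d.toNNReal ^ 2 with hD
  have hD0 : D ≠ 0 := pow_ne_zero 2 (Real.toNNReal_pos.mpr hd).ne'
  ext f
  simp only [corridor, mem_preimage, mem_setOf_eq]
  constructor
  · intro hmem s hs
    have hsD : s / D ≤ t / D := by gcongr
    have h2 := hmem (s / D) hsD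
    have hcan : D * (s / D) = s := by field_simp
    rw [show (scaleMap d w) (s / D) = w s / d from by
        show w (D * (s / D)) / d = _; rw [hcan],
      show (scaleMap d f) (s / D) = f s / d from by
        show f (D * (s / D)) / d = _; rw [hcan]] at h2
    obtain ⟨ha, hb⟩ := h2
    constructor
    · rw [zero_add, ← mul_div_assoc] at ha
      rw [zero_add]
      exact (div_le_div_iff_of_pos_right hd).mp ha
    · have hb' : f s / d ≤ (d + β * w s) / d := by
        rw [add_div, div_self hd.ne', mul_div_assoc]
        exact hb
      exact (div_le_div_iff_of_pos_right hd).mp hb'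
  · intro hmem s hs
    have hsD : D * s ≤ t := by
      calc D * s ≤ D * (t / D) := mul_le_mul_right hs D
        _ = t := by field_simp
    obtain ⟨ha, hb⟩ := hmem (D * s) hsD
    rw [zero_add] at ha
    show 0 + β * (w (D * s) / d) ≤ f (D * s) / d ∧ f (D * s) / d ≤ 1 + β * (w (D * s) / d)
    constructor
    · rw [zero_add, ← mul_div_assoc]
      exact (div_le_div_iff_of_pos_right hd).mpr ha
    · have : f (D * s) / d ≤ (d + β * w (D * s)) / d :=
        (div_le_div_iff_of_pos_right hd).mpr hb
      rwa [add_div, div_self hd.ne', mul_div_assoc] at this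

end CorridorScalingAux

open CorridorScalingAux in
/-- **Scaling.** If the quenched exponential decay rate of staying in a corridor of
width `1` is `Γ₁` and that of a corridor of width `d` is `Γ_d`, then `Γ_d = Γ₁ / d²`. -/
theorem corridor_rate_scaling
    (β d : ℝ) (hd : 0 < d)
    (ν : Measure BMPath) (hν : IsBMLaw 0 ν)
    (μ : ℝ → Measure BMPath) (hμ : ∀ x : ℝ, IsBMLaw x (μ x))
    (Γ₁ Γd : ℝ) (hΓ₁ : 0 < Γ₁) (hΓd : 0 < Γd)
    (h₁ : ∀ᵐ w ∂ν, Tendsto (fun t : ℝ≥0 =>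
        -(1 / (t : ℝ)) * Real.log (⨆ x : ℝ, ((μ x) (corridor β 0 1 t w)).toReal))
      atTop (𝓝 Γ₁))
    (h₂ : ∀ᵐ w ∂ν, Tendsto (fun t : ℝ≥0 =>
        -(1 / (t : ℝ)) * Real.log (⨆ x : ℝ, ((μ x) (corridor β 0 d t w)).toReal))
      atTop (𝓝 Γd)) :
    Γd = Γ₁ / d ^ 2 := by
  classical
  haveI := hν.isProb
  set D : ℝ≥0 := d.toNNReal ^ 2 with hD
  have hD0 : D ≠ 0 := pow_ne_zero 2 (Real.toNNReal_pos.mpr hd).ne'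
  have hDcoe : (D : ℝ) = d ^ 2 := by
    rw [hD]; push_cast [Real.coe_toNNReal d hd.le]; ring
  have hDne : (D : ℝ) ≠ 0 := by rw [hDcoe]; exact pow_ne_zero 2 hd.ne'
  -- the scaled Wiener measure is again Wiener measure
  have hν' : ν.map (scaleMap d) = ν := by
    have h0 := isBMLaw_scaleMap hd hν
    rw [zero_div] at h0
    exact bm_unique h0 hν
  -- pointwise identity between the suprema for widths `d` and `1`
  have hsup : ∀ (w : BMPath) (t : ℝ≥0),
      (⨆ x : ℝ, ((μ x) (corridor β 0 d t w)).toReal)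
      = ⨆ x : ℝ, ((μ x) (corridor β 0 1 (t / D) (scaleMap d w))).toReal := by
    intro w t
    have key : ∀ x : ℝ, (μ x) (corridor β 0 d t w)
        = (μ (x / d)) (corridor β 0 1 (t / D) (scaleMap d w)) := by
      intro x
      rw [← scaleMap_preimage_corridor hd β t w,
        ← Measure.map_apply (measurable_scaleMap d)
          (CorridorScalingAux.measurableSet_corridor β 0 1 (t / D) (scaleMap d w)),
        bm_unique (isBMLaw_scaleMap hd (hμ x)) (hμ (x / d))]
    have hsurj : Function.Surjective (fun x : ℝ => x / d) := fun y =>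
      ⟨y * d, by field_simp⟩
    calc (⨆ x : ℝ, ((μ x) (corridor β 0 d t w)).toReal)
        = ⨆ x : ℝ, ((μ (x / d)) (corridor β 0 1 (t / D) (scaleMap d w))).toReal := by
          simp_rw [key]
      _ = _ := hsurj.iSup_comp (fun y => ((μ y) (corridor β 0 1 (t / D) (scaleMap d w))).toReal)
  -- transfer `h₁` along the scaling map
  have hmap : ∀ᵐ w ∂(ν.map (scaleMap d)), Tendsto (fun t : ℝ≥0 =>
      -(1 / (t : ℝ)) * Real.log (⨆ x : ℝ, ((μ x) (corridor β 0 1 t w)).toReal))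
      atTop (𝓝 Γ₁) := by rw [hν']; exact h₁
  have h₁' := ae_of_ae_map (measurable_scaleMap d).aemeasurable hmap
  -- pick a path where both limits hold
  have hne : ν ≠ 0 := IsProbabilityMeasure.ne_zero ν
  haveI : (ae ν).NeBot := ae_neBot.mpr hne
  obtain ⟨w, hw1, hw2⟩ := (h₁'.and h₂).exists
  -- the rescaled limit
  have hdiv : Tendsto (fun t : ℝ≥0 => t / D) atTop atTop := by
    apply tendsto_atTop_atTop_of_monotone
    · intro a b hab; show a / D ≤ b / D; gcongr
    · intro b; exact ⟨b * D, by rw [mul_div_assoc, div_self hD0, mul_one]⟩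
  have hcomp : Tendsto (fun t : ℝ≥0 =>
      -(1 / ((t / D : ℝ≥0) : ℝ)) * Real.log (⨆ x : ℝ,
        ((μ x) (corridor β 0 1 (t / D) (scaleMap d w))).toReal)) atTop (𝓝 Γ₁) :=
    hw1.comp hdiv
  have hconst : Tendsto (fun t : ℝ≥0 => (1 / (D : ℝ)) *
      (-(1 / ((t / D : ℝ≥0) : ℝ)) * Real.log (⨆ x : ℝ,
        ((μ x) (corridor β 0 1 (t / D) (scaleMap d w))).toReal))) atTop
      (𝓝 ((1 / (D : ℝ)) * Γ₁)) := hcomp.const_mul _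
  have hfun : (fun t : ℝ≥0 =>
      -(1 / (t : ℝ)) * Real.log (⨆ x : ℝ, ((μ x) (corridor β 0 d t w)).toReal))
      = fun t : ℝ≥0 => (1 / (D : ℝ)) *
        (-(1 / ((t / D : ℝ≥0) : ℝ)) * Real.log (⨆ x : ℝ,
          ((μ x) (corridor β 0 1 (t / D) (scaleMap d w))).toReal)) := by
    funext t
    rw [hsup w t]
    have hcoe : ((t / D : ℝ≥0) : ℝ) = (t : ℝ) / (D : ℝ) := NNReal.coe_div t D
    rw [hcoe]
    rcases eq_or_ne (t : ℝ) 0 with h0 | h0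
    · rw [h0]; simp
    · field_simp
  rw [hfun] at hw2
  have hfin := tendsto_nhds_unique hw2 hconst
  rw [hfin, hDcoe, one_div, inv_mul_eq_div]
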